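/- arXiv:1703.09136 — 2 statements merged into one kernel-verified Lean document; each statement's English description precedes it below -/
import Mathlib

section
/- Let $u_{\mathbf{x}_0}(\mathbf{x}) = g(\mathbf{x}, \mathbf{x}_0) + g(\mathbf{x}, \mathbf{x}_0^{im}) + \int_0^\infty g(\mathbf{x}, \mathbf{x}_0^{im} - s\hat y)\, 2i\alpha e^{i\alpha s}\, ds$ where $g$ is the free-space 2-D Helmholtz Green's function with wavenumber $k$, $\mathbf{x}_0 = (x_0, y_0)$ with $y_0 > 0$, and $\mathbf{x}_0^{im} = (x_0, -y_0)$. Then for $\mathbf{x} = (x, 0)$ on the interface, $u_{\mathbf{x}_0}$ satisfies the impedance boundary condition $\frac{\partial u_{\mathbf{x}_0}}{\partial y}(x, 0) + i\alpha\, u_{\mathbf{x}_0}(x, 0) = 0$ (in the sense of the analytic continuation of the integral, assuming all integrals converge). -/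
open MeasureTheory Complex

/-- Chain rule for a radial profile composed with the distance function. -/
lemma aux_radial_deriv {A : ℝ} (f f' : ℝ → ℂ)
    (hf : ∀ r : ℝ, 0 < r → HasDerivAt f (f' r) r)
    (b t : ℝ) (h : 0 < A + (t - b) ^ 2) :
    HasDerivAt (fun y : ℝ => f (Real.sqrt (A + (y - b) ^ 2)))
      (((t - b) / Real.sqrt (A + (t - b) ^ 2)) • f' (Real.sqrt (A + (t - b) ^ 2))) t := by
  have hg : HasDerivAt (fun y : ℝ => A + (y - b) ^ 2) (2 * (t - b)) t := by
    have h1 : HasDerivAt (fun y : ℝ => (y - b) ^ 2) (2 * (t - b)) t := by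
      refine (((hasDerivAt_id t).sub_const b).pow 2).congr_deriv ?_
      simp
    simpa using h1.const_add A
  have hs : HasDerivAt (fun y : ℝ => Real.sqrt (A + (y - b) ^ 2))
      (1 / (2 * Real.sqrt (A + (t - b) ^ 2)) * (2 * (t - b))) t :=
    (Real.hasDerivAt_sqrt h.ne').comp t hg
  have hcomp := (hf _ (Real.sqrt_pos.mpr h)).scomp t hs
  have hsq : 0 < Real.sqrt (A + (t - b) ^ 2) := Real.sqrt_pos.mpr h
  convert hcomp using 2
  · rfl
  · rfl
  · rw [one_div, ← mul_comm (2 * (t - b)), ← div_eq_mul_inv, mul_div_mul_left _ _ two_ne_zero]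

/-- The domain Green's function `u_{x₀}(x) = g(x,x₀) + g(x,x₀ⁱᵐ) +
∫₀^∞ g(x, x₀ⁱᵐ - s ŷ) 2iα e^{iαs} ds` for the half-space impedance problem
satisfies `∂_y u + iα u = 0` on the interface `y = 0`.  Here the free-space
Green's function is radial, `g(x, x') = f(‖x - x'‖)` with
`f(r) = (i/4) H₀⁽¹⁾(k r)`; the function `f` is abstracted as any
differentiable radial profile, and the convergence/decay of all the improper
integrals, as well as differentiation under the integral sign, are taken as
hypotheses ("assuming all integrals converge"). -/
theorem stmt_12 (k α x x0 y0 : ℝ) (hk : 0 < k) (hα : 0 < α) (hy0 : 0 < y0)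
    (f f' : ℝ → ℂ) (hf : ∀ r : ℝ, 0 < r → HasDerivAt f (f' r) r)
    (D : ℝ → ℝ → ℝ)
    (hD : ∀ y b : ℝ, D y b = Real.sqrt ((x - x0) ^ 2 + (y - b) ^ 2))
    (μ : ℝ → ℂ) (hμ : ∀ s : ℝ, μ s = 2 * I * α * Complex.exp (I * α * s))
    (u : ℝ → ℂ)
    (hu : ∀ y : ℝ, u y = f (D y y0) + f (D y (-y0))
        + ∫ s in Set.Ioi (0 : ℝ), f (D y (-y0 - s)) * μ s)
    (hint : IntegrableOn (fun s : ℝ => f (D 0 (-y0 - s)) * μ s) (Set.Ioi 0))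
    (hint' : IntegrableOn
      (fun s : ℝ => deriv (fun s' : ℝ => f (D 0 (-y0 - s'))) s * μ s) (Set.Ioi 0))
    (hdecay : Filter.Tendsto (fun s : ℝ => f (D 0 (-y0 - s)) * μ s)
      Filter.atTop (nhds 0))
    (hDI : HasDerivAt (fun y : ℝ => ∫ s in Set.Ioi (0 : ℝ), f (D y (-y0 - s)) * μ s)
      (∫ s in Set.Ioi (0 : ℝ),
        deriv (fun y : ℝ => f (D y (-y0 - s))) 0 * μ s) 0) :
    deriv u 0 + I * α * u 0 = 0 := by
  set A : ℝ := (x - x0) ^ 2 with hAdef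
  set R : ℝ := Real.sqrt (A + y0 ^ 2) with hRdef
  have hA0 : (0 : ℝ) ≤ A := sq_nonneg (x - x0)
  -- derivative of the direct term at y = 0
  have hpos1 : 0 < A + (0 - y0) ^ 2 := by nlinarith
  have hfun1 : (fun y : ℝ => f (D y y0))
      = fun y : ℝ => f (Real.sqrt (A + (y - y0) ^ 2)) := by
    funext y; rw [hD]
  have d1 : HasDerivAt (fun y : ℝ => f (D y y0)) ((-y0 / R) • f' R) 0 := by
    rw [hfun1]
    simpa only [zero_sub, neg_sq] using aux_radial_deriv f f' hf y0 0 hpos1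
  -- derivative of the image term at y = 0
  have hpos2 : 0 < A + (0 - -y0) ^ 2 := by nlinarith
  have hfun2 : (fun y : ℝ => f (D y (-y0)))
      = fun y : ℝ => f (Real.sqrt (A + (y - -y0) ^ 2)) := by
    funext y; rw [hD]
  have d2 : HasDerivAt (fun y : ℝ => f (D y (-y0))) ((y0 / R) • f' R) 0 := by
    rw [hfun2]
    simpa only [zero_sub, neg_neg, neg_sq] using aux_radial_deriv f f' hf (-y0) 0 hpos2
  have d12 : HasDerivAt (fun y : ℝ => f (D y y0) + f (D y (-y0))) 0 0 := by
    have h := d1.add d2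
    rwa [← add_smul, show -y0 / R + y0 / R = 0 from by ring, zero_smul] at h
  -- derivative of u at 0
  have hufun : u = fun y : ℝ => f (D y y0) + f (D y (-y0))
      + ∫ s in Set.Ioi (0 : ℝ), f (D y (-y0 - s)) * μ s := funext hu
  have hderivu : deriv u 0 = ∫ s in Set.Ioi (0 : ℝ),
      deriv (fun y : ℝ => f (D y (-y0 - s))) 0 * μ s := by
    rw [hufun]
    exact ((d12.add hDI).deriv).trans (zero_add _)
  -- derivative in s of the integrand profile
  have Gderiv : ∀ s : ℝ, 0 ≤ s →
      HasDerivAt (fun s' : ℝ => f (D 0 (-y0 - s')))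
        (((s + y0) / Real.sqrt (A + (s + y0) ^ 2)) • f' (Real.sqrt (A + (s + y0) ^ 2))) s := by
    intro s hs
    have hpos : 0 < A + (s - -y0) ^ 2 := by nlinarith
    have hfun : (fun s' : ℝ => f (D 0 (-y0 - s')))
        = fun s' : ℝ => f (Real.sqrt (A + (s' - -y0) ^ 2)) := by
      funext s'; rw [hD]; congr 1; rw [hAdef]; ring
    rw [hfun]
    simpa only [sub_neg_eq_add] using aux_radial_deriv f f' hf (-y0) s hpos
  -- derivative in y at 0 of the integrand equals the derivative in s
  have Yderiv : ∀ s : ℝ, 0 ≤ s →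
      HasDerivAt (fun y : ℝ => f (D y (-y0 - s)))
        (((s + y0) / Real.sqrt (A + (s + y0) ^ 2)) • f' (Real.sqrt (A + (s + y0) ^ 2))) 0 := by
    intro s hs
    have e : (0 : ℝ) - (-y0 - s) = s + y0 := by ring
    have hpos : 0 < A + ((0 : ℝ) - (-y0 - s)) ^ 2 := by rw [e]; nlinarith
    have hfun : (fun y : ℝ => f (D y (-y0 - s)))
        = fun y : ℝ => f (Real.sqrt (A + (y - (-y0 - s)) ^ 2)) := by
      funext y; rw [hD]
    rw [hfun]
    simpa only [e] using aux_radial_deriv f f' hf (-y0 - s) 0 hpos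
  have hW : (∫ s in Set.Ioi (0 : ℝ), deriv (fun y : ℝ => f (D y (-y0 - s))) 0 * μ s)
      = ∫ s in Set.Ioi (0 : ℝ), deriv (fun s' : ℝ => f (D 0 (-y0 - s'))) s * μ s := by
    refine setIntegral_congr_fun measurableSet_Ioi fun s hs => ?_
    rw [(Yderiv s (le_of_lt hs)).deriv, (Gderiv s (le_of_lt hs)).deriv]
  -- derivative of μ
  have hμd : ∀ s : ℝ, HasDerivAt μ (I * α * μ s) s := by
    intro s
    have hμfun : μ = fun s : ℝ => 2 * I * α * Complex.exp (I * α * s) := funext hμ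
    rw [hμfun]
    have h1 : HasDerivAt (fun s : ℝ => (s : ℂ)) 1 s := by
      exact Complex.ofRealCLM.hasDerivAt (x := s)
    have h2 := ((h1.const_mul (I * (α : ℂ)))).cexp
    have h3 := h2.const_mul (2 * I * (α : ℂ))
    convert h3 using 1
    · rfl
    · beta_reduce
      ring
  -- integration by parts on Ioi 0
  have hP : ∀ s ∈ Set.Ioi (0 : ℝ),
      HasDerivAt (fun t : ℝ => f (D 0 (-y0 - t)) * μ t)
        (deriv (fun s' : ℝ => f (D 0 (-y0 - s'))) s * μ s
          + I * α * (f (D 0 (-y0 - s)) * μ s)) s := by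
    intro s hs
    have h := (Gderiv s (le_of_lt hs)).mul (hμd s)
    rw [(Gderiv s (le_of_lt hs)).deriv]
    convert h using 1
    · rfl
    · rfl
    · ring
  have hcont : ContinuousWithinAt (fun t : ℝ => f (D 0 (-y0 - t)) * μ t) (Set.Ici 0) 0 :=
    (((Gderiv 0 le_rfl).mul (hμd 0)).continuousAt).continuousWithinAt
  have hintsum : IntegrableOn (fun s : ℝ =>
      deriv (fun s' : ℝ => f (D 0 (-y0 - s'))) s * μ s
        + I * α * (f (D 0 (-y0 - s)) * μ s)) (Set.Ioi 0) :=
    hint'.add (hint.const_mul (I * (α : ℂ)))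
  have hibp := integral_Ioi_of_hasDerivAt_of_tendsto hcont hP hintsum hdecay
  -- values at the interface
  have e1 : D 0 y0 = R := by rw [hD, hRdef, hAdef]; congr 1; ring
  have e2 : D 0 (-y0) = R := by rw [hD, hRdef, hAdef]; congr 1; ring
  have e3 : D 0 (-y0 - 0) = R := by rw [hD, hRdef, hAdef]; congr 1; ring
  have e4 : μ 0 = 2 * I * α := by rw [hμ]; simp
  rw [e3, e4, integral_add hint' (hint.const_mul _), integral_const_mul] at hibp
  rw [hderivu, hW, hu 0, e1, e2]
  linear_combination hibp
end

section
/- Let $d > 0$ and $k_1, k_2, k_3 > 0$, and fix a real $\lambda$ with $\lambda > \max(k_1, k_2, k_3)$, so $\gamma_j = \sqrt{\lambda^2 - k_j^2} > 0$ for $j = 1,2,3$. Then the $4\times 4$ interface matrix $M(\lambda) = \begin{pmatrix} 1/\gamma_1 & -1/\gamma_2 & -e^{-\gamma_2 d}/\gamma_2 & 0 \\ 0 & e^{-\gamma_2 d}/\gamma_2 & 1/\gamma_2 & -1/\gamma_3 \\ 1 & 1 & -e^{-\gamma_2 d} & 0 \\ 0 & e^{-\gamma_2 d} & -1 & -1 \end{pmatrix}$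 is invertible. -/
set_option maxHeartbeats 1000000 in
theorem my_det_fin_four {R : Type*} [CommRing R] (A : Matrix (Fin 4) (Fin 4) R) :
    A.det =
      A 0 0 * (A 1 1 * A 2 2 * A 3 3 - A 1 1 * A 2 3 * A 3 2 - A 1 2 * A 2 1 * A 3 3
        + A 1 2 * A 2 3 * A 3 1 + A 1 3 * A 2 1 * A 3 2 - A 1 3 * A 2 2 * A 3 1)
      - A 0 1 * (A 1 0 * A 2 2 * A 3 3 - A 1 0 * A 2 3 * A 3 2 - A 1 2 * A 2 0 * A 3 3
        + A 1 2 * A 2 3 * A 3 0 + A 1 3 * A 2 0 * A 3 2 - A 1 3 * A 2 2 * A 3 0)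
      + A 0 2 * (A 1 0 * A 2 1 * A 3 3 - A 1 0 * A 2 3 * A 3 1 - A 1 1 * A 2 0 * A 3 3
        + A 1 1 * A 2 3 * A 3 0 + A 1 3 * A 2 0 * A 3 1 - A 1 3 * A 2 1 * A 3 0)
      - A 0 3 * (A 1 0 * A 2 1 * A 3 2 - A 1 0 * A 2 2 * A 3 1 - A 1 1 * A 2 0 * A 3 2
        + A 1 1 * A 2 2 * A 3 0 + A 1 2 * A 2 0 * A 3 1 - A 1 2 * A 2 1 * A 3 0) := by
  rw [Matrix.det_succ_row_zero]
  simp only [Fin.sum_univ_succ, Fin.sum_univ_zero, Matrix.det_fin_three, Matrix.submatrix_apply,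
    Fin.succ_zero_eq_one, Fin.succ_one_eq_two, Fin.val_zero, Fin.val_succ, Fin.zero_succAbove,
    Fin.succ_succAbove_zero, Fin.succ_succAbove_one]
  norm_num [Fin.succAbove, Fin.lt_def]
  simp only [show (Fin.succ 2 : Fin 4) = 3 from rfl, show (Fin.castSucc 2 : Fin 4) = 2 from rfl]
  ring

set_option maxHeartbeats 1000000 in
theorem stmt_17 (d k1 k2 k3 lam : ℝ) (hd : 0 < d)
    (hk1 : 0 < k1) (hk2 : 0 < k2) (hk3 : 0 < k3)
    (hlam : max k1 (max k2 k3) < lam) :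
    IsUnit (Matrix.of
      !![1 / Real.sqrt (lam ^ 2 - k1 ^ 2), -1 / Real.sqrt (lam ^ 2 - k2 ^ 2),
          -Real.exp (-Real.sqrt (lam ^ 2 - k2 ^ 2) * d) / Real.sqrt (lam ^ 2 - k2 ^ 2), 0;
        0, Real.exp (-Real.sqrt (lam ^ 2 - k2 ^ 2) * d) / Real.sqrt (lam ^ 2 - k2 ^ 2),
          1 / Real.sqrt (lam ^ 2 - k2 ^ 2), -1 / Real.sqrt (lam ^ 2 - k3 ^ 2);
        1, 1, -Real.exp (-Real.sqrt (lam ^ 2 - k2 ^ 2) * d), 0;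
        0, Real.exp (-Real.sqrt (lam ^ 2 - k2 ^ 2) * d), -1, -1]) := by
  have h1 : k1 < lam := lt_of_le_of_lt (le_max_left _ _) hlam
  have h2 : k2 < lam := lt_of_le_of_lt (le_trans (le_max_left _ _) (le_max_right _ _)) hlam
  have h3 : k3 < lam := lt_of_le_of_lt (le_trans (le_max_right _ _) (le_max_right _ _)) hlam
  have hg1 : 0 < Real.sqrt (lam ^ 2 - k1 ^ 2) := Real.sqrt_pos.2 (by nlinarith)
  have hg2 : 0 < Real.sqrt (lam ^ 2 - k2 ^ 2) := Real.sqrt_pos.2 (by nlinarith)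
  have hg3 : 0 < Real.sqrt (lam ^ 2 - k3 ^ 2) := Real.sqrt_pos.2 (by nlinarith)
  set g1 := Real.sqrt (lam ^ 2 - k1 ^ 2)
  set g2 := Real.sqrt (lam ^ 2 - k2 ^ 2)
  set g3 := Real.sqrt (lam ^ 2 - k3 ^ 2)
  set E := Real.exp (-g2 * d) with hE
  have hE0 : 0 < E := Real.exp_pos _
  have hE1 : E < 1 := by
    rw [hE, Real.exp_lt_one_iff]
    nlinarith
  have hof : ∀ M : Matrix (Fin 4) (Fin 4) ℝ, Matrix.of M = M := fun _ => rfl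
  rw [hof]
  rw [Matrix.isUnit_iff_isUnit_det, isUnit_iff_ne_zero]
  rw [my_det_fin_four]
  simp only [Matrix.of_apply, Matrix.cons_val', Matrix.cons_val_zero, Matrix.cons_val_one,
    Matrix.head_cons, Matrix.empty_val', Matrix.cons_val_fin_one, Matrix.head_fin_const,
    Matrix.cons_val_two, Matrix.tail_cons, Matrix.cons_val_three]
  have hE2 : E ^ 2 < 1 := by nlinarith
  have key : ((g1 + g2) * (g2 + g3) + E ^ 2 * (g1 - g2) * (g2 - g3)) > 0 := by
    rcases le_or_gt 0 ((g1 - g2) * (g2 - g3)) with hc | hc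
    · nlinarith [mul_pos hg1 hg2, mul_pos hg2 hg3, sq_nonneg E]
    · nlinarith [mul_pos hg1 hg2, mul_pos hg2 hg3]
  have hne1 : g1 ≠ 0 := ne_of_gt hg1
  have hne2 : g2 ≠ 0 := ne_of_gt hg2
  have hne3 : g3 ≠ 0 := ne_of_gt hg3
  field_simp
  intro hcontra
  have hpos : (0:ℝ) < ((g1 + g2) * (g2 + g3) + E ^ 2 * (g1 - g2) * (g2 - g3)) * (g2 ^ 3 * g3 ^ 3) :=
    mul_pos key (by positivity)
  rcases div_eq_zero_iff.1 hcontra with hc | hc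
  · nlinarith [hpos, key, hc]
  · exact absurd hc (by positivity)
end
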